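/- Let R be an integral domain, I an ideal of R, and M a torsion-free R-module. Then every R-module homomorphism φ : I → M satisfying φ(t) ∈ tM for all t ∈ I is principal, i.e., there exists m ∈ M with φ(t) = tm for all t ∈ I. -/

import Mathlib

theorem principal_of_torsionFree {R : Type*} [CommRing R] [IsDomain R]
    (I : Ideal R) (M : Type*) [AddCommGroup M] [Module R M]
    [NoZeroSMulDivisors R M]
    (φ : I →ₗ[R] M) (hφ : ∀ t : I, ∃ m : M, φ t = (t : R) • m) :
    ∃ m : M, ∀ t : I, φ t = (t : R) • m := by
  by_cases hI : I = ⊥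
  · refine ⟨0, fun t => ?_⟩
    subst hI
    have : (t : R) = 0 := by exact_mod_cast Ideal.mem_bot.mp t.2
    have ht : t = 0 := Subtype.ext this
    simp [ht]
  · obtain ⟨t₀, ht₀mem, ht₀⟩ := Submodule.exists_mem_ne_zero_of_ne_bot hI
    set T₀ : I := ⟨t₀, ht₀mem⟩
    obtain ⟨m, hm⟩ := hφ T₀
    refine ⟨m, fun t => ?_⟩
    obtain ⟨m', hm'⟩ := hφ t
    have key : t₀ • (φ t - (t : R) • m) = 0 := by
      have h1 : t₀ • φ t = φ (t₀ • t) := (φ.map_smul t₀ t).symm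
      have h2 : t₀ • t = (t : R) • T₀ := by
        ext; simp [T₀, mul_comm]
      rw [smul_sub, h1, h2, φ.map_smul, hm, smul_comm, sub_self]
    rcases smul_eq_zero.mp key with h | h
    · exact absurd h ht₀
    · exact sub_eq_zero.mp h
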